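/- With the notation in the context, the multiplicity m of γ as a root of F equals the least index i such that i·r + b_i = min_{0 ≤ j ≤ D} (j·r + b_j). -/

import Mathlib

open PowerSeries Polynomial

private lemma aux_order_neg (x : PowerSeries ℂ) : (-x).order = x.order := by
  have h : ∀ y : PowerSeries ℂ, y.order ≤ (-y).order := fun y =>
    PowerSeries.le_order _ _ (fun i hi => by
      rw [map_neg, PowerSeries.coeff_of_lt_order i hi, neg_zero])
  exact le_antisymm (by simpa using h (-x)) (h x)

private lemma aux_order_prod {ι : Type*} (s : Finset ι) (g : ι → PowerSeries ℂ) :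
    (∏ j ∈ s, g j).order = ∑ j ∈ s, (g j).order := by
  classical
  induction s using Finset.cons_induction with
  | empty => simp [PowerSeries.order_one]
  | cons a s ha ih => rw [Finset.prod_cons, Finset.sum_cons, PowerSeries.order_mul, ih]

private lemma aux_le_order_sum {ι : Type*} (s : Finset ι) (φ : ι → PowerSeries ℂ) (v : ℕ∞)
    (h : ∀ a ∈ s, v ≤ (φ a).order) : v ≤ (∑ a ∈ s, φ a).order := by
  apply PowerSeries.le_order
  intro i hi
  rw [map_sum]
  exact Finset.sum_eq_zero fun a ha => PowerSeries.coeff_of_lt_order i (lt_of_lt_of_le hi (h a ha))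

private lemma aux_le_add_order_sum {ι : Type*} (s : Finset ι) (φ : ι → PowerSeries ℂ) (v w : ℕ∞)
    (h : ∀ a ∈ s, v ≤ w + (φ a).order) : v ≤ w + (∑ a ∈ s, φ a).order := by
  rcases s.eq_empty_or_nonempty with rfl | hne
  · simp [PowerSeries.order_zero]
  · obtain ⟨a0, ha0, hmin⟩ := Finset.exists_min_image s (fun a => (φ a).order) hne
    exact (h a0 ha0).trans (add_le_add le_rfl (aux_le_order_sum s φ _ (fun a ha => hmin a ha)))

private lemma aux_order_neg_one_pow_mul (n : ℕ) (x : PowerSeries ℂ) :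
    ((-1 : PowerSeries ℂ) ^ n * x).order = x.order := by
  rcases neg_one_pow_eq_or (PowerSeries ℂ) n with h | h <;>
    simp [h, neg_mul, one_mul, aux_order_neg]

private lemma aux_cancel (a : ℕ) (x y : ℕ∞) (h : (a : ℕ∞) + x ≤ (a : ℕ∞) + y) : x ≤ y := by
  exact (WithTop.add_le_add_iff_left (by exact_mod_cast WithTop.coe_ne_top (a := a))).mp h

/-- Theorem 4(ii): the multiplicity `m` of a Newton–Puiseux root `γ` of `f` equals the
least index `i` for which `i·r + bᵢ` achieves `min_j (j·r + b_j)`, where `r` is the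
contact order of `γ`, `γ̃` its truncation in degrees `≤ r`, and `bᵢ` the order of the
coefficient of `Xⁱ` in `F(X + γ̃)`. -/
theorem multiplicity_eq_least_index_newton_polygon
    (f : MvPolynomial (Fin 2) ℝ) (hf : f ≠ 0)
    (m₀ : ℕ) (hm₀ : ∀ j < m₀, MvPolynomial.homogeneousComponent j f = 0)
    (hm₀' : MvPolynomial.homogeneousComponent m₀ f ≠ 0)
    (hreg : MvPolynomial.eval ![1, 0] (MvPolynomial.homogeneousComponent m₀ f) ≠ 0)
    (N : ℕ) (hN : 0 < N)
    (F : Polynomial (PowerSeries ℂ))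
    (hF : F = MvPolynomial.aeval
      ![Polynomial.X, Polynomial.C ((PowerSeries.X : PowerSeries ℂ) ^ N)] f)
    (D : ℕ) (hD : D = F.natDegree)
    (hsplit : ∃ u : PowerSeries ℂ, u ≠ 0 ∧ ∃ γs : Fin D → PowerSeries ℂ,
      F = Polynomial.C u * ∏ j, (Polynomial.X - Polynomial.C (γs j)))
    (γ : PowerSeries ℂ) (hγ : Polynomial.eval γ F = 0)
    (m : ℕ) (hm : m = Polynomial.rootMultiplicity γ F)
    (r : ℕ)
    (hrmax : (∃ γ' : PowerSeries ℂ, Polynomial.eval γ' F = 0 ∧ γ' ≠ γ ∧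
        (γ - γ').order = (r : ℕ∞)) ∧
      ∀ γ' : PowerSeries ℂ, Polynomial.eval γ' F = 0 → γ' ≠ γ → (γ - γ').order ≤ (r : ℕ∞))
    (γt : PowerSeries ℂ)
    (hγt : ∀ k : ℕ, PowerSeries.coeff k γt =
      if k ≤ r then PowerSeries.coeff k γ else 0)
    (c : ℕ → PowerSeries ℂ)
    (hc : ∀ i, c i = (F.comp (Polynomial.X + Polynomial.C γt)).coeff i)
    (b : ℕ → ℕ∞) (hb : ∀ i, b i = (c i).order) :
    ((m * r : ℕ) : ℕ∞) + b m =
        (Finset.range (D + 1)).inf (fun j => ((j * r : ℕ) : ℕ∞) + b j) ∧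
      ∀ i < m, ((i * r : ℕ) : ℕ∞) + b i ≠
        (Finset.range (D + 1)).inf (fun j => ((j * r : ℕ) : ℕ∞) + b j) := by
  classical
  obtain ⟨u, hu, γs, hFfac⟩ := hsplit
  set δ : Fin D → PowerSeries ℂ := fun j => γs j - γt with hδ
  set B : Finset (Fin D) := Finset.univ.filter (fun j => γs j = γ) with hBdef
  -- every γs j is a root of F
  have hroot : ∀ j, Polynomial.eval (γs j) F = 0 := by
    intro j
    rw [hFfac, eval_mul, eval_prod]
    have : ∏ k : Fin D, Polynomial.eval (γs j) (Polynomial.X - Polynomial.C (γs k)) = 0 :=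
      Finset.prod_eq_zero (Finset.mem_univ j) (by simp)
    rw [this, mul_zero]
  -- multiplicity equals card of B
  have hP : (∏ j : Fin D, (Polynomial.X - Polynomial.C (γs j))) =
      ((Finset.univ.val.map γs).map fun a => Polynomial.X - Polynomial.C a).prod := by
    rw [Finset.prod_eq_multiset_prod, Multiset.map_map]; rfl
  have hroots : F.roots = Finset.univ.val.map γs := by
    rw [hFfac, Polynomial.roots_C_mul _ hu, hP, Polynomial.roots_multiset_prod_X_sub_C]
  have hBcard : B.card = m := by
    rw [hm, ← Polynomial.count_roots, hroots, Multiset.count_map]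
    rw [hBdef]
    rw [show (Multiset.filter (fun a => γ = γs a) Finset.univ.val)
        = (Multiset.filter (fun a => γs a = γ) Finset.univ.val) from
      Multiset.filter_congr (fun x _ => by constructor <;> exact Eq.symm)]
    rfl
  have hmD : m ≤ D := by
    rw [← hBcard]
    calc B.card ≤ (Finset.univ : Finset (Fin D)).card := Finset.card_le_univ B
      _ = D := by simp
  -- the truncation error has order > r
  have hγγt : ((r + 1 : ℕ) : ℕ∞) ≤ (γ - γt).order := by
    apply PowerSeries.le_order
    intro i hi
    have hi' : i ≤ r := by
      have : i < r + 1 := by exact_mod_cast hi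
      omega
    rw [map_sub, hγt i, if_pos hi', sub_self]
  have hbig : ∀ j ∈ B, ((r + 1 : ℕ) : ℕ∞) ≤ (δ j).order := by
    intro j hj
    have hjγ : γs j = γ := (Finset.mem_filter.mp hj).2
    simpa [hδ, hjγ] using hγγt
  have hsmall : ∀ j, j ∉ B → (δ j).order ≤ (r : ℕ∞) := by
    intro j hj
    have hne : γs j ≠ γ := fun h => hj (Finset.mem_filter.mpr ⟨Finset.mem_univ j, h⟩)
    have h1 : (γ - γs j).order ≤ (r : ℕ∞) := hrmax.2 _ (hroot j) hne
    have h2 : (γs j - γ).order = (γ - γs j).order := by rw [← neg_sub, aux_order_neg]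
    have hrlt : (r : ℕ∞) < ((r + 1 : ℕ) : ℕ∞) := by exact_mod_cast Nat.lt_succ_self r
    have hlt : (γs j - γ).order < (γ - γt).order :=
      lt_of_le_of_lt (h2 ▸ h1) (lt_of_lt_of_le hrlt hγγt)
    have hrw : δ j = (γs j - γ) + (γ - γt) := by rw [hδ]; ring
    rw [hrw, PowerSeries.order_add_of_order_ne _ _ hlt.ne, min_eq_left hlt.le, h2]
    exact h1
  -- the sum of orders of the "small" differences
  set S : ℕ∞ := ∑ j ∈ Bᶜ, (δ j).order with hSdef
  have hSle : S ≤ ((Bᶜ.card * r : ℕ) : ℕ∞) := by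
    calc S ≤ Bᶜ.card • (r : ℕ∞) :=
          Finset.sum_le_card_nsmul _ _ _ (fun j hj => hsmall j (Finset.mem_compl.mp hj))
      _ = ((Bᶜ.card * r : ℕ) : ℕ∞) := by rw [nsmul_eq_mul]; push_cast; ring
  have hS_ne : S ≠ ⊤ := by
    intro h
    rw [h, top_le_iff] at hSle
    exact absurd hSle (by exact_mod_cast (ENat.coe_ne_top (Bᶜ.card * r)))
  have hu_ne : u.order ≠ ⊤ := fun h => hu (PowerSeries.order_eq_top.mp h)
  have hBc_card : Bᶜ.card = D - m := by rw [Finset.card_compl, hBcard]; simp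
  -- the composed polynomial
  have hcomp : F.comp (Polynomial.X + Polynomial.C γt) =
      Polynomial.C u * ∏ j : Fin D, (Polynomial.X - Polynomial.C (δ j)) := by
    rw [hFfac, mul_comp, C_comp, prod_comp]
    congr 1
    refine Finset.prod_congr rfl (fun j _ => ?_)
    rw [sub_comp, X_comp, C_comp, hδ]
    rw [map_sub]
    ring
  -- coefficients of the product via Vieta
  have hGc : ∀ i ≤ D, (∏ j : Fin D, (Polynomial.X - Polynomial.C (δ j))).coeff i =
      (-1 : PowerSeries ℂ) ^ (D - i) *
        ∑ A ∈ Finset.powersetCard (D - i) (Finset.univ : Finset (Fin D)), ∏ j ∈ A, δ j := by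
    intro i hi
    have hcard : Multiset.card (Finset.univ.val.map δ) = D := by simp
    rw [show (∏ j : Fin D, (Polynomial.X - Polynomial.C (δ j))) =
        ((Finset.univ.val.map δ).map fun t => Polynomial.X - Polynomial.C t).prod from by
      rw [Finset.prod_eq_multiset_prod, Multiset.map_map]; rfl]
    rw [Multiset.prod_X_sub_C_coeff _ (by rw [hcard]; exact hi), hcard,
      Finset.esymm_map_val]
  have hbi : ∀ i, b i = u.order +
      ((∏ j : Fin D, (Polynomial.X - Polynomial.C (δ j))).coeff i).order := by
    intro i
    rw [hb, hc, hcomp, Polynomial.coeff_C_mul, PowerSeries.order_mul]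
  -- the key combinatorial inequality
  have KBcore : ∀ i ≤ D, ∀ A ∈ Finset.powersetCard (D - i) (Finset.univ : Finset (Fin D)),
      ((m * r : ℕ) : ℕ∞) + S + ((A ∩ B).card : ℕ∞) ≤
        ((i * r : ℕ) : ℕ∞) + ∑ j ∈ A, (δ j).order := by
    intro i hi A hA
    obtain ⟨hAsub, hAcard⟩ := Finset.mem_powersetCard.mp hA
    have e1 : (A ∩ B).card + (A \ B).card = D - i := by
      rw [Finset.card_inter_add_card_sdiff]; exact hAcard
    have e2 : (Bᶜ ∩ A).card + (Bᶜ \ A).card = D - m := by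
      rw [Finset.card_inter_add_card_sdiff, hBc_card]
    have hinter : Bᶜ ∩ A = A \ B := by
      ext x; simp [Finset.mem_compl, Finset.mem_sdiff, and_comm]
    have hnat : m * r + (Bᶜ \ A).card * r + (A ∩ B).card
        = i * r + ((A ∩ B).card * r + (A ∩ B).card) := by
      have hmw : m + (Bᶜ \ A).card = i + (A ∩ B).card := by
        have := hinter ▸ e2
        omega
      calc m * r + (Bᶜ \ A).card * r + (A ∩ B).card
          = (m + (Bᶜ \ A).card) * r + (A ∩ B).card := by ring
        _ = (i + (A ∩ B).card) * r + (A ∩ B).card := by rw [hmw]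
        _ = i * r + ((A ∩ B).card * r + (A ∩ B).card) := by ring
    have hsum_split : ∑ j ∈ A ∩ B, (δ j).order + ∑ j ∈ A \ B, (δ j).order
        = ∑ j ∈ A, (δ j).order := by
      rw [← Finset.filter_mem_eq_inter, Finset.sdiff_eq_filter]
      exact Finset.sum_filter_add_sum_filter_not A _ _
    have hSsplit : ∑ j ∈ Bᶜ ∩ A, (δ j).order + ∑ j ∈ Bᶜ \ A, (δ j).order = S := by
      rw [← Finset.filter_mem_eq_inter, Finset.sdiff_eq_filter]
      exact Finset.sum_filter_add_sum_filter_not Bᶜ _ _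
    have h1 : (((A ∩ B).card * (r + 1) : ℕ) : ℕ∞) ≤ ∑ j ∈ A ∩ B, (δ j).order := by
      have := Finset.card_nsmul_le_sum (A ∩ B) (fun j => (δ j).order) (((r + 1 : ℕ)) : ℕ∞)
        (fun j hj => hbig j (Finset.mem_inter.mp hj).2)
      calc (((A ∩ B).card * (r + 1) : ℕ) : ℕ∞) = (A ∩ B).card • (((r + 1 : ℕ)) : ℕ∞) := by
            rw [nsmul_eq_mul]; push_cast; ring
        _ ≤ _ := this
    have h2 : ∑ j ∈ Bᶜ \ A, (δ j).order ≤ (((Bᶜ \ A).card * r : ℕ) : ℕ∞) := by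
      have := Finset.sum_le_card_nsmul (Bᶜ \ A) (fun j => (δ j).order) ((r : ℕ) : ℕ∞)
        (fun j hj => hsmall j (Finset.mem_compl.mp (Finset.mem_sdiff.mp hj).1))
      calc ∑ j ∈ Bᶜ \ A, (δ j).order ≤ (Bᶜ \ A).card • ((r : ℕ) : ℕ∞) := this
        _ = (((Bᶜ \ A).card * r : ℕ) : ℕ∞) := by rw [nsmul_eq_mul]; push_cast; ring
    have hcast : ((m * r : ℕ) : ℕ∞) + (((Bᶜ \ A).card * r : ℕ) : ℕ∞) + ((A ∩ B).card : ℕ∞)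
        = ((i * r : ℕ) : ℕ∞) + (((A ∩ B).card * (r + 1) : ℕ) : ℕ∞) := by
      have : (((m * r + (Bᶜ \ A).card * r + (A ∩ B).card : ℕ)) : ℕ∞)
          = (((i * r + ((A ∩ B).card * r + (A ∩ B).card) : ℕ)) : ℕ∞) := by
        exact_mod_cast congrArg (Nat.cast : ℕ → ℕ∞) hnat
      push_cast at this ⊢
      convert this using 1 <;> ring
    calc ((m * r : ℕ) : ℕ∞) + S + ((A ∩ B).card : ℕ∞)
        = ((m * r : ℕ) : ℕ∞) + (∑ j ∈ Bᶜ ∩ A, (δ j).order + ∑ j ∈ Bᶜ \ A, (δ j).order)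
            + ((A ∩ B).card : ℕ∞) := by rw [hSsplit]
      _ ≤ ((m * r : ℕ) : ℕ∞) + (∑ j ∈ Bᶜ ∩ A, (δ j).order + (((Bᶜ \ A).card * r : ℕ) : ℕ∞))
            + ((A ∩ B).card : ℕ∞) := by gcongr
      _ = (((m * r : ℕ) : ℕ∞) + (((Bᶜ \ A).card * r : ℕ) : ℕ∞) + ((A ∩ B).card : ℕ∞))
            + ∑ j ∈ A \ B, (δ j).order := by rw [hinter]; ring
      _ = (((i * r : ℕ) : ℕ∞) + (((A ∩ B).card * (r + 1) : ℕ) : ℕ∞))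
            + ∑ j ∈ A \ B, (δ j).order := by rw [hcast]
      _ ≤ (((i * r : ℕ) : ℕ∞) + ∑ j ∈ A ∩ B, (δ j).order) + ∑ j ∈ A \ B, (δ j).order := by
            gcongr
      _ = ((i * r : ℕ) : ℕ∞) + ∑ j ∈ A, (δ j).order := by rw [add_assoc, hsum_split]
  -- Claim A: uniform lower bound on i·r + bᵢ
  have ClaimA : ∀ i ≤ D, ((m * r : ℕ) : ℕ∞) + S + ((m - i : ℕ) : ℕ∞) ≤
      ((i * r : ℕ) : ℕ∞) +
        ((∏ j : Fin D, (Polynomial.X - Polynomial.C (δ j))).coeff i).order := by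
    intro i hi
    rw [hGc i hi, aux_order_neg_one_pow_mul]
    apply aux_le_add_order_sum
    intro A hA
    rw [aux_order_prod]
    refine le_trans ?_ (KBcore i hi A hA)
    gcongr
    -- (m - i : ℕ) ≤ (A ∩ B).card
    have hk : m - i ≤ (A ∩ B).card := by
      obtain ⟨hAsub, hAcard⟩ := Finset.mem_powersetCard.mp hA
      have e1 : (A ∩ B).card + (A \ B).card = D - i := by
        rw [Finset.card_inter_add_card_sdiff]; exact hAcard
      have e2 : (Bᶜ ∩ A).card + (Bᶜ \ A).card = D - m := by
        rw [Finset.card_inter_add_card_sdiff, hBc_card]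
      have hinter : Bᶜ ∩ A = A \ B := by
        ext x; simp [Finset.mem_compl, Finset.mem_sdiff, and_comm]
      rw [hinter] at e2
      omega
    exact_mod_cast hk
  -- Claim B: exact value of b m
  have hBc_mem : Bᶜ ∈ Finset.powersetCard (D - m) (Finset.univ : Finset (Fin D)) :=
    Finset.mem_powersetCard.mpr ⟨Finset.subset_univ _, hBc_card⟩
  have ClaimB : ((∏ j : Fin D, (Polynomial.X - Polynomial.C (δ j))).coeff m).order = S := by
    rw [hGc m hmD, aux_order_neg_one_pow_mul]
    rw [← Finset.add_sum_erase _ _ hBc_mem]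
    have hord1 : (∏ j ∈ Bᶜ, δ j).order = S := aux_order_prod Bᶜ δ
    have hord2 : S + 1 ≤
        (∑ A ∈ (Finset.powersetCard (D - m) (Finset.univ : Finset (Fin D))).erase Bᶜ,
          ∏ j ∈ A, δ j).order := by
      apply aux_le_order_sum
      intro A hA
      obtain ⟨hAne, hA'⟩ := Finset.mem_erase.mp hA
      have hk1 : 1 ≤ (A ∩ B).card := by
        by_contra hk0
        have hk0' : (A ∩ B).card = 0 := by omega
        obtain ⟨hAsub, hAcard⟩ := Finset.mem_powersetCard.mp hA'
        have hsub : A ⊆ Bᶜ := by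
          intro x hx
          rw [Finset.mem_compl]
          intro hxB
          have : x ∈ A ∩ B := Finset.mem_inter.mpr ⟨hx, hxB⟩
          rw [Finset.card_eq_zero.mp hk0'] at this
          exact absurd this (Finset.notMem_empty x)
        exact hAne (Finset.eq_of_subset_of_card_le hsub (by rw [hAcard, hBc_card]))
      have := KBcore m hmD A hA'
      have h' : ((m * r : ℕ) : ℕ∞) + (S + 1) ≤ ((m * r : ℕ) : ℕ∞) + ∑ j ∈ A, (δ j).order := by
        calc ((m * r : ℕ) : ℕ∞) + (S + 1) = ((m * r : ℕ) : ℕ∞) + S + ((1 : ℕ) : ℕ∞) := by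
              push_cast; ring
          _ ≤ ((m * r : ℕ) : ℕ∞) + S + ((A ∩ B).card : ℕ∞) :=
              add_le_add le_rfl (by exact_mod_cast hk1)
          _ ≤ ((m * r : ℕ) : ℕ∞) + ∑ j ∈ A, (δ j).order := this
      have := aux_cancel (m * r) _ _ h'
      rw [aux_order_prod]
      exact this
    have hSlt : S < S + 1 := by
      lift S to ℕ using hS_ne with n hn
      exact_mod_cast Nat.lt_succ_self n
    have hne : (∏ j ∈ Bᶜ, δ j).order ≠
        (∑ A ∈ (Finset.powersetCard (D - m) (Finset.univ : Finset (Fin D))).erase Bᶜ,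
          ∏ j ∈ A, δ j).order := by
      rw [hord1]
      exact ne_of_lt (lt_of_lt_of_le hSlt hord2)
    rw [PowerSeries.order_add_of_order_ne _ _ hne, hord1,
      min_eq_left (le_of_lt (lt_of_lt_of_le hSlt hord2))]
  have hbm : b m = u.order + S := by rw [hbi m, ClaimB]
  -- main lower bound for each index
  have hlow : ∀ j ≤ D, ((m * r : ℕ) : ℕ∞) + b m + ((m - j : ℕ) : ℕ∞) ≤
      ((j * r : ℕ) : ℕ∞) + b j := by
    intro j hj
    calc ((m * r : ℕ) : ℕ∞) + b m + ((m - j : ℕ) : ℕ∞)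
        = u.order + (((m * r : ℕ) : ℕ∞) + S + ((m - j : ℕ) : ℕ∞)) := by rw [hbm]; ring
      _ ≤ u.order + (((j * r : ℕ) : ℕ∞) +
            ((∏ k : Fin D, (Polynomial.X - Polynomial.C (δ k))).coeff j).order) :=
          add_le_add le_rfl (ClaimA j hj)
      _ = ((j * r : ℕ) : ℕ∞) + b j := by rw [hbi j]; ring
  have hinf : ((m * r : ℕ) : ℕ∞) + b m =
      (Finset.range (D + 1)).inf (fun j => ((j * r : ℕ) : ℕ∞) + b j) := by
    apply le_antisymm
    · apply Finset.le_inf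
      intro j hj
      have hjD : j ≤ D := Nat.lt_succ_iff.mp (Finset.mem_range.mp hj)
      calc ((m * r : ℕ) : ℕ∞) + b m
          ≤ ((m * r : ℕ) : ℕ∞) + b m + ((m - j : ℕ) : ℕ∞) := le_self_add
        _ ≤ ((j * r : ℕ) : ℕ∞) + b j := hlow j hjD
    · exact Finset.inf_le (Finset.mem_range.mpr (Nat.lt_succ_of_le hmD))
  refine ⟨hinf, ?_⟩
  intro i hi
  rw [← hinf]
  have hfin : ((m * r : ℕ) : ℕ∞) + b m ≠ ⊤ := by
    rw [hbm]
    intro h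
    rcases WithTop.add_eq_top.mp h with h' | h'
    · exact absurd h' (by exact_mod_cast (ENat.coe_ne_top (m * r)))
    · exact absurd h' (WithTop.add_eq_top.mp · |>.elim hu_ne hS_ne)
  have hstrict : ((m * r : ℕ) : ℕ∞) + b m < ((i * r : ℕ) : ℕ∞) + b i := by
    have h1 : ((m * r : ℕ) : ℕ∞) + b m + 1 ≤ ((i * r : ℕ) : ℕ∞) + b i := by
      refine le_trans ?_ (hlow i (le_trans (le_of_lt hi) hmD))
      gcongr
      exact_mod_cast Nat.one_le_iff_ne_zero.mpr (by omega)
    have h2 : ((m * r : ℕ) : ℕ∞) + b m < ((m * r : ℕ) : ℕ∞) + b m + 1 := by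
      set V := ((m * r : ℕ) : ℕ∞) + b m
      lift V to ℕ using hfin with n hn
      exact_mod_cast Nat.lt_succ_self n
    exact lt_of_lt_of_le h2 h1
  exact (ne_of_gt hstrict)
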